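/- Two pure partial planes of the same order n, neither of which is a finite projective plane (i.e., each has size different from n^2+n+1), are isomorphic if and only if their point-line-adjacency graphs are isomorphic as simple graphs. -/

import Mathlib

/-- A pure partial plane (PPP) of order `n`: a finite collection of distinct lines,
each an `(n+1)`-element subset of a point set of `n^2+n+1` points, such that any two
distinct lines intersect in exactly one point. -/
def IsPPP (n : ℕ) (L : Finset (Finset (Fin (n ^ 2 + n + 1)))) : Prop :=
  (∀ ℓ ∈ L, ℓ.card = n + 1) ∧
    ∀ ℓ₁ ∈ L, ∀ ℓ₂ ∈ L, ℓ₁ ≠ ℓ₂ → (ℓ₁ ∩ ℓ₂).card = 1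

/-- The degree of a point: the number of lines of the collection containing it. -/
def ppDeg {n : ℕ} (L : Finset (Finset (Fin (n ^ 2 + n + 1))))
    (p : Fin (n ^ 2 + n + 1)) : ℕ :=
  (L.filter fun ℓ => p ∈ ℓ).card

/-- The point-line-adjacency graph of a PPP: the simple bipartite graph whose vertices
are the points and the lines, with a point-vertex adjacent to a line-vertex iff the
line contains the point. -/
def PLGraph (n : ℕ) (L : Finset (Finset (Fin (n ^ 2 + n + 1)))) :
    SimpleGraph (Fin (n ^ 2 + n + 1) ⊕ {ℓ : Finset (Fin (n ^ 2 + n + 1)) // ℓ ∈ L}) where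
  Adj v w :=
    (∃ p ℓ, v = Sum.inl p ∧ w = Sum.inr ℓ ∧ p ∈ ℓ.1) ∨
    (∃ p ℓ, v = Sum.inr ℓ ∧ w = Sum.inl p ∧ p ∈ ℓ.1)
  symm := by
    constructor
    rintro v w (⟨p, ℓ, rfl, rfl, h⟩ | ⟨p, ℓ, rfl, rfl, h⟩)
    · exact Or.inr ⟨p, ℓ, rfl, rfl, h⟩
    · exact Or.inl ⟨p, ℓ, rfl, rfl, h⟩
  loopless := by
    constructor
    rintro v (⟨p, ℓ, rfl, h, -⟩ | ⟨p, ℓ, rfl, h, -⟩) <;> simp at h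

/-- Two PPPs (on the same point set) are isomorphic if there are a bijection of the
points and a bijection of the lines under which the incidence relation is preserved. -/
def PPPIso (n : ℕ) (L₁ L₂ : Finset (Finset (Fin (n ^ 2 + n + 1)))) : Prop :=
  ∃ (e : Fin (n ^ 2 + n + 1) ≃ Fin (n ^ 2 + n + 1))
    (f : {ℓ : Finset (Fin (n ^ 2 + n + 1)) // ℓ ∈ L₁} ≃
         {ℓ : Finset (Fin (n ^ 2 + n + 1)) // ℓ ∈ L₂}),
    ∀ (p : Fin (n ^ 2 + n + 1)) (ℓ : {ℓ : Finset (Fin (n ^ 2 + n + 1)) // ℓ ∈ L₁}),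
      p ∈ ℓ.1 ↔ e p ∈ (f ℓ).1

open Sum

variable {n : ℕ} {L : Finset (Finset (Fin (n ^ 2 + n + 1)))}

lemma plg_adj_inl_inr {p} {ℓ : {ℓ // ℓ ∈ L}} :
    (PLGraph n L).Adj (inl p) (inr ℓ) ↔ p ∈ ℓ.1 := by
  constructor
  · rintro (⟨p', ℓ', hp, hℓ, h⟩ | ⟨p', ℓ', hv, hw, h⟩)
    · obtain rfl : p = p' := by simpa using hp
      obtain rfl : ℓ = ℓ' := by simpa using hℓ
      exact h
    · simp at hv
  · intro h; exact Or.inl ⟨p, ℓ, rfl, rfl, h⟩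

lemma plg_adj_left_inl {v} {q : Fin (n ^ 2 + n + 1)} (h : (PLGraph n L).Adj v (inl q)) :
    ∃ m : {ℓ // ℓ ∈ L}, v = inr m ∧ q ∈ m.1 := by
  rcases h with ⟨p', ℓ', hv, hw, h⟩ | ⟨p', ℓ', hv, hw, h⟩
  · simp at hw
  · obtain rfl : q = p' := by simpa using hw
    exact ⟨ℓ', hv, h⟩

lemma plg_adj_inl_left {p : Fin (n ^ 2 + n + 1)} {w} (h : (PLGraph n L).Adj (inl p) w) :
    ∃ m : {ℓ // ℓ ∈ L}, w = inr m ∧ p ∈ m.1 := by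
  rcases h with ⟨p', ℓ', hv, hw, h⟩ | ⟨p', ℓ', hv, hw, h⟩
  · obtain rfl : p = p' := by simpa using hv
    exact ⟨ℓ', hw, h⟩
  · simp at hv

lemma plg_adj_isLeft {v w} (h : (PLGraph n L).Adj v w) : v.isLeft = !w.isLeft := by
  rcases h with ⟨p', ℓ', rfl, rfl, h⟩ | ⟨p', ℓ', rfl, rfl, h⟩ <;> rfl

lemma card_eq_of_deg (h : IsPPP n L) (hne : L.Nonempty)
    (hdeg : ∀ p ℓ, ℓ ∈ L → p ∈ ℓ → ppDeg L p = n + 1) :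
    L.card = n ^ 2 + n + 1 := by
  obtain ⟨ℓ, hℓ⟩ := hne
  have hkey : L.erase ℓ = ℓ.biUnion (fun q => (L.filter (fun m => q ∈ m)).erase ℓ) := by
    ext m
    simp only [Finset.mem_erase, Finset.mem_biUnion, Finset.mem_filter]
    constructor
    · rintro ⟨hmℓ, hm⟩
      obtain ⟨a, ha⟩ := Finset.card_eq_one.mp (h.2 ℓ hℓ m hm (Ne.symm hmℓ))
      have ha' : a ∈ ℓ ∩ m := ha ▸ Finset.mem_singleton_self a
      exact ⟨a, (Finset.mem_inter.mp ha').1, hmℓ, hm, (Finset.mem_inter.mp ha').2⟩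
    · rintro ⟨q, hq, hmℓ, hm, hqm⟩
      exact ⟨hmℓ, hm⟩
  have hdisj : ∀ q₁ ∈ ℓ, ∀ q₂ ∈ ℓ, q₁ ≠ q₂ →
      Disjoint ((L.filter (fun m => q₁ ∈ m)).erase ℓ)
        ((L.filter (fun m => q₂ ∈ m)).erase ℓ) := by
    intro q₁ h1 q₂ h2 hq
    rw [Finset.disjoint_left]
    intro m hm1 hm2
    simp only [Finset.mem_erase, Finset.mem_filter] at hm1 hm2
    obtain ⟨a, ha⟩ := Finset.card_eq_one.mp (h.2 ℓ hℓ m hm1.2.1 (Ne.symm hm1.1))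
    have h1' : q₁ ∈ ℓ ∩ m := Finset.mem_inter.mpr ⟨h1, hm1.2.2⟩
    have h2' : q₂ ∈ ℓ ∩ m := Finset.mem_inter.mpr ⟨h2, hm2.2.2⟩
    rw [ha, Finset.mem_singleton] at h1' h2'
    exact hq (h1'.trans h2'.symm)
  have hterm : ∀ q ∈ ℓ, ((L.filter (fun m => q ∈ m)).erase ℓ).card = n := by
    intro q hq
    have hmem : ℓ ∈ L.filter (fun m => q ∈ m) := Finset.mem_filter.mpr ⟨hℓ, hq⟩
    rw [Finset.card_erase_of_mem hmem]
    have hd := hdeg q ℓ hℓ hq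
    unfold ppDeg at hd
    omega
  have hcount : (L.erase ℓ).card = ℓ.card * n := by
    rw [hkey, Finset.card_biUnion hdisj, Finset.sum_congr rfl hterm, Finset.sum_const,
      smul_eq_mul]
  have h1 : (L.erase ℓ).card = L.card - 1 := Finset.card_erase_of_mem hℓ
  have h2 : 1 ≤ L.card := Finset.card_pos.mpr ⟨ℓ, hℓ⟩
  have h3 : ℓ.card = n + 1 := h.1 ℓ hℓ
  have h4 : n ^ 2 = n * n := sq n
  rw [h3] at hcount
  have h5 : (n + 1) * n = n * n + n := by ring
  omega

lemma ncard_nbhd_inl (p : Fin (n ^ 2 + n + 1)) :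
    Nat.card ((PLGraph n L).neighborSet (inl p)) = ppDeg L p := by
  have e : {m : Finset (Fin (n ^ 2 + n + 1)) // m ∈ L.filter (fun ℓ => p ∈ ℓ)} ≃
      ((PLGraph n L).neighborSet (inl p)) := by
    refine Equiv.ofBijective (fun m =>
      ⟨inr ⟨m.1, (Finset.mem_filter.mp m.2).1⟩,
        Or.inl ⟨p, ⟨m.1, (Finset.mem_filter.mp m.2).1⟩, rfl, rfl,
          (Finset.mem_filter.mp m.2).2⟩⟩) ⟨?_, ?_⟩
    · intro m₁ m₂ hm
      apply Subtype.ext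
      have h1 := Sum.inr_injective (congrArg Subtype.val hm)
      exact congrArg (fun x : {ℓ // ℓ ∈ L} => x.1) h1
    · rintro ⟨w, hw⟩
      obtain ⟨m, rfl, hpm⟩ := plg_adj_inl_left hw
      exact ⟨⟨m.1, Finset.mem_filter.mpr ⟨m.2, hpm⟩⟩, by simp⟩
  rw [← Nat.card_congr e, Nat.card_eq_fintype_card, Fintype.card_coe]
  rfl

lemma ncard_nbhd_inr (m : {ℓ // ℓ ∈ L}) :
    Nat.card ((PLGraph n L).neighborSet (inr m)) = m.1.card := by
  have e : {q : Fin (n ^ 2 + n + 1) // q ∈ m.1} ≃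
      ((PLGraph n L).neighborSet (inr m)) := by
    refine Equiv.ofBijective (fun q =>
      ⟨inl q.1, Or.inr ⟨q.1, m, rfl, rfl, q.2⟩⟩) ⟨?_, ?_⟩
    · intro q₁ q₂ hq
      apply Subtype.ext
      exact Sum.inl_injective (congrArg Subtype.val hq)
    · rintro ⟨w, hw⟩
      have hw' : (PLGraph n L).Adj w (inr m) := hw.symm
      rcases hw' with ⟨p', ℓ', rfl, hℓ, h⟩ | ⟨p', ℓ', rfl, hℓ, h⟩
      · obtain rfl : m = ℓ' := by simpa using hℓ
        exact ⟨⟨p', h⟩, rfl⟩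
      · simp at hℓ
  rw [← Nat.card_congr e, Nat.card_eq_fintype_card, Fintype.card_coe]

lemma plg_not_adj_inl_inl {p q : Fin (n ^ 2 + n + 1)} :
    ¬ (PLGraph n L).Adj (inl p) (inl q) := by
  rintro (⟨p', ℓ', hv, hw, h⟩ | ⟨p', ℓ', hv, hw, h⟩)
  · simp at hw
  · simp at hv

lemma plg_not_adj_inr_inr {ℓ m : {ℓ // ℓ ∈ L}} :
    ¬ (PLGraph n L).Adj (inr ℓ) (inr m) := by
  rintro (⟨p', ℓ', hv, hw, h⟩ | ⟨p', ℓ', hv, hw, h⟩)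
  · simp at hv
  · simp at hw

lemma plg_adj_inr_inl {p} {ℓ : {ℓ // ℓ ∈ L}} :
    (PLGraph n L).Adj (inr ℓ) (inl p) ↔ p ∈ ℓ.1 := by
  rw [(PLGraph n L).adj_comm, plg_adj_inl_inr]

theorem ppp_iso_iff_graph_iso (n : ℕ) (L₁ L₂ : Finset (Finset (Fin (n ^ 2 + n + 1))))
    (h₁ : IsPPP n L₁) (h₂ : IsPPP n L₂)
    (hs₁ : L₁.card ≠ n ^ 2 + n + 1) (hs₂ : L₂.card ≠ n ^ 2 + n + 1) :
    PPPIso n L₁ L₂ ↔ Nonempty (PLGraph n L₁ ≃g PLGraph n L₂) := by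
  constructor
  · rintro ⟨e, f, hef⟩
    refine ⟨⟨Equiv.sumCongr e f, ?_⟩⟩
    rintro (p | ℓ) (q | m)
    · simp [plg_not_adj_inl_inl]
    · simpa [plg_adj_inl_inr] using (hef p m).symm
    · simpa [plg_adj_inr_inl] using (hef q ℓ).symm
    · simp [plg_not_adj_inr_inr]
  · rintro ⟨σ⟩
    by_cases hL₁ : L₁.Nonempty
    · -- main case
      obtain ⟨ℓ₀, hℓ₀⟩ := hL₁
      have hside : ∀ ℓ m : {ℓ // ℓ ∈ L₁}, (σ (inr ℓ)).isLeft = (σ (inr m)).isLeft := by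
        intro ℓ m
        by_cases hlm : ℓ = m
        · rw [hlm]
        · have hne : ℓ.1 ≠ m.1 := fun h => hlm (Subtype.ext h)
          obtain ⟨a, ha⟩ := Finset.card_eq_one.mp (h₁.2 ℓ.1 ℓ.2 m.1 m.2 hne)
          have ha' : a ∈ ℓ.1 ∩ m.1 := ha ▸ Finset.mem_singleton_self a
          have A1 : (PLGraph n L₂).Adj (σ (inl a)) (σ (inr ℓ)) :=
            σ.map_rel_iff.mpr (plg_adj_inl_inr.mpr (Finset.mem_inter.mp ha').1)
          have A2 : (PLGraph n L₂).Adj (σ (inl a)) (σ (inr m)) :=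
            σ.map_rel_iff.mpr (plg_adj_inl_inr.mpr (Finset.mem_inter.mp ha').2)
          exact Bool.not_inj ((plg_adj_isLeft A1).symm.trans (plg_adj_isLeft A2))
      cases hc : σ (inr ⟨ℓ₀, hℓ₀⟩) with
      | inl q₀ =>
        exfalso
        have hcross : ∀ ℓ : {ℓ // ℓ ∈ L₁}, ∃ q, σ (inr ℓ) = inl q := by
          intro ℓ
          have hs := hside ℓ ⟨ℓ₀, hℓ₀⟩
          rw [hc] at hs
          cases hx : σ (inr ℓ) with
          | inl q => exact ⟨q, rfl⟩
          | inr m => rw [hx] at hs; simp at hs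
        apply hs₁
        apply card_eq_of_deg h₁ ⟨ℓ₀, hℓ₀⟩
        intro p ℓ hℓ hpℓ
        obtain ⟨q, hq⟩ := hcross ⟨ℓ, hℓ⟩
        have hadj : (PLGraph n L₂).Adj (σ (inl p)) (σ (inr ⟨ℓ, hℓ⟩)) :=
          σ.map_rel_iff.mpr (plg_adj_inl_inr.mpr hpℓ)
        rw [hq] at hadj
        obtain ⟨m, hm, hqm⟩ := plg_adj_left_inl hadj
        have hcard : Nat.card ((PLGraph n L₂).neighborSet (σ (inl p))) =
            Nat.card ((PLGraph n L₁).neighborSet (inl p)) :=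
          (Nat.card_congr (σ.mapNeighborSet (inl p))).symm
        rw [hm, ncard_nbhd_inr, ncard_nbhd_inl] at hcard
        rw [← hcard]
        exact h₂.1 m.1 m.2
      | inr m₀ =>
        have hlines : ∀ ℓ : {ℓ // ℓ ∈ L₁}, ∃ m, σ (inr ℓ) = inr m := by
          intro ℓ
          have hs := hside ℓ ⟨ℓ₀, hℓ₀⟩
          rw [hc] at hs
          cases hx : σ (inr ℓ) with
          | inl q => rw [hx] at hs; simp at hs
          | inr m => exact ⟨m, rfl⟩
        have hpoints : ∀ p, ∃ q, σ (inl p) = inl q := by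
          intro p
          cases hx : σ (inl p) with
          | inl q => exact ⟨q, rfl⟩
          | inr m =>
            exfalso
            have hmcard := h₂.1 m.1 m.2
            obtain ⟨q, hq⟩ := Finset.card_pos.mp (by omega : 0 < m.1.card)
            have hadj2 : (PLGraph n L₂).Adj (σ (inl p)) (σ (σ.symm (inl q))) := by
              rw [hx, σ.apply_symm_apply]
              exact plg_adj_inr_inl.mpr hq
            have hadj1 : (PLGraph n L₁).Adj (inl p) (σ.symm (inl q)) :=
              σ.map_rel_iff.mp hadj2
            obtain ⟨ℓ, hℓeq, hpℓ⟩ := plg_adj_inl_left hadj1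
            obtain ⟨m', hm'⟩ := hlines ℓ
            have : σ (inr ℓ) = inl q := by rw [← hℓeq, σ.apply_symm_apply]
            rw [this] at hm'
            simp at hm'
        choose e' he' using hpoints
        choose f' hf' using hlines
        have einj : Function.Injective e' := by
          intro p₁ p₂ h
          have : σ (inl p₁) = σ (inl p₂) := by rw [he', he', h]
          simpa using σ.toEquiv.injective this
        have esurj : Function.Surjective e' := by
          intro q
          cases hx : σ.symm (inl q) with
          | inr ℓ =>
            exfalso
            have hq : σ (inr ℓ) = inl q := by rw [← hx, σ.apply_symm_apply]
            have hm := hf' ℓ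
            rw [hq] at hm
            simp at hm
          | inl p =>
            refine ⟨p, ?_⟩
            have h1 : σ (inl p) = inl q := by rw [← hx, σ.apply_symm_apply]
            have h2 := he' p
            rw [h1] at h2
            simpa using h2.symm
        have finj : Function.Injective f' := by
          intro ℓ₁ ℓ₂ h
          have : σ (inr ℓ₁) = σ (inr ℓ₂) := by rw [hf', hf', h]
          simpa using σ.toEquiv.injective this
        have fsurj : Function.Surjective f' := by
          intro m
          cases hx : σ.symm (inr m) with
          | inl p =>
            exfalso
            have hq : σ (inl p) = inr m := by rw [← hx, σ.apply_symm_apply]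
            have hq' := he' p
            rw [hq] at hq'
            simp at hq'
          | inr ℓ =>
            refine ⟨ℓ, ?_⟩
            have h1 : σ (inr ℓ) = inr m := by rw [← hx, σ.apply_symm_apply]
            have h2 := hf' ℓ
            rw [h1] at h2
            simpa using h2.symm
        refine ⟨Equiv.ofBijective e' ⟨einj, esurj⟩, Equiv.ofBijective f' ⟨finj, fsurj⟩, ?_⟩
        intro p ℓ
        have hiff := σ.map_rel_iff (a := inl p) (b := inr ℓ)
        rw [he' p, hf' ℓ] at hiff
        show p ∈ ℓ.1 ↔ e' p ∈ (f' ℓ).1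
        simpa [plg_adj_inl_inr] using hiff.symm
    · -- L₁ empty
      have hL1 : L₁ = ∅ := Finset.not_nonempty_iff_eq_empty.mp hL₁
      have hL2 : L₂ = ∅ := by
        by_contra h
        obtain ⟨m, hm⟩ := Finset.nonempty_iff_ne_empty.mpr h
        have hmcard := h₂.1 m hm
        obtain ⟨q, hq⟩ := Finset.card_pos.mp (by omega : 0 < m.card)
        have hadj : (PLGraph n L₂).Adj (inl q) (inr ⟨m, hm⟩) := plg_adj_inl_inr.mpr hq
        have hadj' : (PLGraph n L₁).Adj (σ.symm (inl q)) (σ.symm (inr ⟨m, hm⟩)) :=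
          σ.symm.map_rel_iff.mpr hadj
        rcases hadj' with ⟨p', ℓ', hv, hw, h'⟩ | ⟨p', ℓ', hv, hw, h'⟩ <;>
          exact absurd ℓ'.2 (by simp [hL1])
      haveI hE1 : IsEmpty {ℓ : Finset (Fin (n ^ 2 + n + 1)) // ℓ ∈ L₁} :=
        ⟨fun x => by simpa [hL1] using x.2⟩
      haveI hE2 : IsEmpty {ℓ : Finset (Fin (n ^ 2 + n + 1)) // ℓ ∈ L₂} :=
        ⟨fun x => by simpa [hL2] using x.2⟩
      exact ⟨Equiv.refl _, Equiv.equivOfIsEmpty _ _, fun p ℓ => isEmptyElim ℓ⟩
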